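/- If U''(s) > 0 for every s ∈ ℝ, then for every x ∈ ℝ^{2d}, the vectors e_{z₁}, e_{u₁}, …, e_{z_{d−1}}, e_{u_{d−1}} all belong to the linear span of {𝒰₀(x), 𝒰₁(x), …, 𝒰_{2d−3}(x)} in ℝ^{2d}. -/

import Mathlib

open scoped BigOperators

noncomputable section

abbrev E (d : ℕ) : Type := (Fin d → ℝ) × (Fin d → ℝ)

def ez (d : ℕ) (i : Fin d) : E d := (Pi.single i 1, 0)

def eu (d : ℕ) (i : Fin d) : E d := (0, Pi.single i 1)

noncomputable def ham (d : ℕ) (V U : ℝ → ℝ) (x : E d) : ℝ :=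
  (∑ i : Fin d, ((x.2 i) ^ 2 / 2 + V (x.1 i))) +
    ∑ i : Fin (d - 1),
      U (x.1 ⟨i.1 + 1, by have := i.2; omega⟩ - x.1 ⟨i.1, by have := i.2; omega⟩)

noncomputable def drift (d : ℕ) (γ₁ γd : ℝ) (V U : ℝ → ℝ) (x : E d) : E d :=
  (x.2, fun i =>
    -(fderiv ℝ (ham d V U) x (ez d i)) -
      (if i.1 = 0 then γ₁ * x.2 i else 0) -
      (if i.1 = d - 1 then γd * x.2 i else 0))

noncomputable def lie (d : ℕ) (X Y : E d → E d) (x : E d) : E d :=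
  fderiv ℝ Y x (X x) - fderiv ℝ X x (Y x)

noncomputable def UU (d : ℕ) (b : E d → E d) (v : E d) : ℕ → E d → E d
  | 0 => fun _ => v
  | n + 1 => lie d (UU d b v n) b

namespace Hormander

def fup (d : ℕ) (j : Fin (d - 1)) : Fin d := ⟨j.1 + 1, by have := j.2; omega⟩
def flo (d : ℕ) (j : Fin (d - 1)) : Fin d := ⟨j.1, by have := j.2; omega⟩

noncomputable def dlt (d : ℕ) (j : Fin (d - 1)) (x : E d) : ℝ := x.1 (fup d j) - x.1 (flo d j)

def Zc (d : ℕ) (i : Fin d) : E d →L[ℝ] ℝ :=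
  (ContinuousLinearMap.proj i).comp (ContinuousLinearMap.fst ℝ (Fin d → ℝ) (Fin d → ℝ))

def Wc (d : ℕ) (i : Fin d) : E d →L[ℝ] ℝ :=
  (ContinuousLinearMap.proj i).comp (ContinuousLinearMap.snd ℝ (Fin d → ℝ) (Fin d → ℝ))

@[simp] lemma Zc_apply {d : ℕ} (i : Fin d) (x : E d) : Zc d i x = x.1 i := rfl
@[simp] lemma Wc_apply {d : ℕ} (i : Fin d) (x : E d) : Wc d i x = x.2 i := rfl

variable {d : ℕ} (γ₁ γd : ℝ) (V U : ℝ → ℝ)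

noncomputable def Dham (d : ℕ) (V U : ℝ → ℝ) (x : E d) : E d →L[ℝ] ℝ :=
  (∑ i : Fin d, ((x.2 i) • Wc d i + (deriv V (x.1 i)) • Zc d i)) +
    ∑ j : Fin (d - 1), (deriv U (dlt d j x)) • (Zc d (fup d j) - Zc d (flo d j))

lemma ham_hasFDerivAt (hV : ContDiff ℝ (⊤ : ℕ∞) V) (hU : ContDiff ℝ (⊤ : ℕ∞) U) (x : E d) :
    HasFDerivAt (ham d V U) (Dham d V U x) x := by
  apply HasFDerivAt.add
  · apply HasFDerivAt.fun_sum
    intro i _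
    apply HasFDerivAt.add
    · have h1 : HasDerivAt (fun t : ℝ => t ^ 2 / 2) (x.2 i) (x.2 i) := by
        simpa using (hasDerivAt_pow 2 (x.2 i)).div_const 2
      exact h1.comp_hasFDerivAt x (Wc d i).hasFDerivAt
    · exact ((hV.differentiable (by simp) (x.1 i)).hasDerivAt).comp_hasFDerivAt x
        (Zc d i).hasFDerivAt
  · apply HasFDerivAt.fun_sum
    intro j _
    exact ((hU.differentiable (by simp) (dlt d j x)).hasDerivAt).comp_hasFDerivAt x
      (Zc d (fup d j) - Zc d (flo d j)).hasFDerivAt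

end Hormander

namespace Hormander

variable {d : ℕ} {γ₁ γd : ℝ} {V U : ℝ → ℝ}

noncomputable def bE (d : ℕ) (γ₁ γd : ℝ) (V U : ℝ → ℝ) (x : E d) : E d :=
  (x.2, fun i =>
    -(deriv V (x.1 i) +
        ∑ j : Fin (d - 1), deriv U (dlt d j x) *
          ((Pi.single i 1 : Fin d → ℝ) (fup d j) - (Pi.single i 1 : Fin d → ℝ) (flo d j))) -
      (if i.1 = 0 then γ₁ * x.2 i else 0) -
      (if i.1 = d - 1 then γd * x.2 i else 0))

lemma drift_eq (hV : ContDiff ℝ (⊤ : ℕ∞) V) (hU : ContDiff ℝ (⊤ : ℕ∞) U) :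
    drift d γ₁ γd V U = bE d γ₁ γd V U := by
  funext x
  unfold drift bE
  refine Prod.ext rfl ?_
  funext i
  have hf : fderiv ℝ (ham d V U) x = Dham d V U x := (ham_hasFDerivAt V U hV hU x).fderiv
  rw [hf]
  simp only [Dham, ContinuousLinearMap.add_apply, ContinuousLinearMap.sum_apply,
    ContinuousLinearMap.smul_apply, ContinuousLinearMap.sub_apply, Zc_apply, Wc_apply]
  have h1 : ∀ i' : Fin d, (ez d i).2 i' = 0 := fun i' => rfl
  have h2 : ∀ i' : Fin d, (ez d i).1 i' = (Pi.single i 1 : Fin d → ℝ) i' := fun i' => rfl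
  simp only [h1, h2, smul_eq_mul, mul_zero, zero_add]
  congr 1
  · have : ∀ i' : Fin d, deriv V (x.1 i') * (Pi.single i 1 : Fin d → ℝ) i'
        = if i' = i then deriv V (x.1 i') else 0 := by
      intro i'; rw [Pi.single_apply]; split <;> simp
    rw [Finset.sum_congr rfl (fun i' _ => this i')]
    simp

end Hormander

namespace Hormander

variable {d : ℕ} {γ₁ γd : ℝ} {V U : ℝ → ℝ}

noncomputable def DbR (d : ℕ) (γ₁ γd : ℝ) (V U : ℝ → ℝ) (i : Fin d) (x : E d) :
    E d →L[ℝ] ℝ :=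
  -((deriv (deriv V) (x.1 i)) • Zc d i +
      ∑ j : Fin (d - 1),
        ((Pi.single i 1 : Fin d → ℝ) (fup d j) - (Pi.single i 1 : Fin d → ℝ) (flo d j)) •
          ((deriv (deriv U) (dlt d j x)) • (Zc d (fup d j) - Zc d (flo d j)))) -
    (if i.1 = 0 then γ₁ • Wc d i else 0) -
    (if i.1 = d - 1 then γd • Wc d i else 0)

noncomputable def DbE (d : ℕ) (γ₁ γd : ℝ) (V U : ℝ → ℝ) (x : E d) : E d →L[ℝ] E d :=
  (ContinuousLinearMap.snd ℝ (Fin d → ℝ) (Fin d → ℝ)).prod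
    (ContinuousLinearMap.pi fun i => DbR d γ₁ γd V U i x)

lemma contDiff_deriv (hV : ContDiff ℝ (⊤ : ℕ∞) V) : ContDiff ℝ (⊤ : ℕ∞) (deriv V) := by
  have := (contDiff_infty_iff_deriv.mp (by exact_mod_cast hV)).2
  exact_mod_cast this

lemma bE_hasFDerivAt (hV : ContDiff ℝ (⊤ : ℕ∞) V) (hU : ContDiff ℝ (⊤ : ℕ∞) U) (x : E d) :
    HasFDerivAt (bE d γ₁ γd V U) (DbE d γ₁ γd V U x) x := by
  have hV' : Differentiable ℝ (deriv V) :=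
    (contDiff_deriv hV).differentiable (by simp)
  have hU' : Differentiable ℝ (deriv U) :=
    (contDiff_deriv hU).differentiable (by simp)
  apply HasFDerivAt.prodMk
  · exact hasFDerivAt_snd
  · apply hasFDerivAt_pi.2
    intro i
    apply HasFDerivAt.sub
    apply HasFDerivAt.sub
    · apply HasFDerivAt.neg
      apply HasFDerivAt.add
      · exact ((hV' (x.1 i)).hasDerivAt).comp_hasFDerivAt x (Zc d i).hasFDerivAt
      · apply HasFDerivAt.fun_sum
        intro j _
        exact (((hU' (dlt d j x)).hasDerivAt).comp_hasFDerivAt x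
          (Zc d (fup d j) - Zc d (flo d j)).hasFDerivAt).mul_const _
    · by_cases h : i.1 = 0
      · simp only [if_pos h]
        exact ((Wc d i).hasFDerivAt).const_mul γ₁
      · simp only [if_neg h]
        exact hasFDerivAt_const 0 x
    · by_cases h : i.1 = d - 1
      · simp only [if_pos h]
        exact ((Wc d i).hasFDerivAt).const_mul γd
      · simp only [if_neg h]
        exact hasFDerivAt_const 0 x

end Hormander

namespace Hormander

variable {d : ℕ} {γ₁ γd : ℝ} {V U : ℝ → ℝ}

lemma fderiv_bE (hV : ContDiff ℝ (⊤ : ℕ∞) V) (hU : ContDiff ℝ (⊤ : ℕ∞) U) (x : E d) :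
    fderiv ℝ (bE d γ₁ γd V U) x = DbE d γ₁ γd V U x :=
  (bE_hasFDerivAt hV hU x).fderiv

lemma fderiv_bE_fst (hV : ContDiff ℝ (⊤ : ℕ∞) V) (hU : ContDiff ℝ (⊤ : ℕ∞) U)
    (x v : E d) : (fderiv ℝ (bE d γ₁ γd V U) x v).1 = v.2 := by
  rw [fderiv_bE hV hU]; rfl

lemma fderiv_bE_snd (hV : ContDiff ℝ (⊤ : ℕ∞) V) (hU : ContDiff ℝ (⊤ : ℕ∞) U)
    (x v : E d) (i : Fin d) :
    (fderiv ℝ (bE d γ₁ γd V U) x v).2 i =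
      -(deriv (deriv V) (x.1 i) * v.1 i +
          ∑ j : Fin (d - 1),
            ((Pi.single i 1 : Fin d → ℝ) (fup d j) - (Pi.single i 1 : Fin d → ℝ) (flo d j)) *
              (deriv (deriv U) (dlt d j x) * (v.1 (fup d j) - v.1 (flo d j)))) -
        (if i.1 = 0 then γ₁ * v.2 i else 0) - (if i.1 = d - 1 then γd * v.2 i else 0) := by
  rw [fderiv_bE hV hU]
  show DbR d γ₁ γd V U i x v = _
  simp only [DbR, ContinuousLinearMap.sub_apply, ContinuousLinearMap.neg_apply,
    ContinuousLinearMap.add_apply, ContinuousLinearMap.smul_apply,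
    ContinuousLinearMap.sum_apply, Zc_apply, Wc_apply, smul_eq_mul, apply_ite (fun L : E d →L[ℝ] ℝ => L v),
    ContinuousLinearMap.zero_apply]

end Hormander

namespace Hormander

variable {d : ℕ} {γ₁ γd : ℝ} {V U : ℝ → ℝ}

lemma bE_contDiff (hV : ContDiff ℝ (⊤ : ℕ∞) V) (hU : ContDiff ℝ (⊤ : ℕ∞) U) :
    ContDiff ℝ (⊤ : ℕ∞) (bE d γ₁ γd V U) := by
  apply ContDiff.prodMk
  · exact contDiff_snd
  · apply contDiff_pi.2
    intro i
    apply ContDiff.sub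
    apply ContDiff.sub
    · apply ContDiff.neg
      apply ContDiff.add
      · exact (contDiff_deriv hV).comp (Zc d i).contDiff
      · apply ContDiff.sum
        intro j _
        exact ((contDiff_deriv hU).comp (Zc d (fup d j) - Zc d (flo d j)).contDiff).mul
          contDiff_const
    · by_cases h : i.1 = 0
      · simp only [if_pos h]
        exact contDiff_const.mul ((Wc d i).contDiff)
      · simp only [if_neg h]; exact contDiff_const
    · by_cases h : i.1 = d - 1
      · simp only [if_pos h]
        exact contDiff_const.mul ((Wc d i).contDiff)
      · simp only [if_neg h]; exact contDiff_const

lemma lie_contDiff {X Y : E d → E d} (hX : ContDiff ℝ (⊤ : ℕ∞) X)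
    (hY : ContDiff ℝ (⊤ : ℕ∞) Y) : ContDiff ℝ (⊤ : ℕ∞) (lie d X Y) := by
  have h1 : ContDiff ℝ (⊤ : ℕ∞) (fderiv ℝ X) := by
    have := hX.fderiv_right (m := (⊤ : ℕ∞)) (by exact_mod_cast le_top)
    exact this
  have h2 : ContDiff ℝ (⊤ : ℕ∞) (fderiv ℝ Y) := by
    have := hY.fderiv_right (m := (⊤ : ℕ∞)) (by exact_mod_cast le_top)
    exact this
  exact (h2.clm_apply hX).sub (h1.clm_apply hY)

lemma fderiv_coord_fst_zero {X : E d → E d} (hX : Differentiable ℝ X) (m : Fin d)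
    (h : ∀ y, (X y).1 m = 0) (x w : E d) : (fderiv ℝ X x w).1 m = 0 := by
  have h1 : HasFDerivAt (⇑(Zc d m) ∘ X) ((Zc d m).comp (fderiv ℝ X x)) x :=
    (Zc d m).hasFDerivAt.comp x (hX x).hasFDerivAt
  have h0 : HasFDerivAt (⇑(Zc d m) ∘ X) (0 : E d →L[ℝ] ℝ) x := by
    have he : (⇑(Zc d m) ∘ X) = fun _ => (0 : ℝ) := funext fun y => h y
    rw [he]; exact hasFDerivAt_const _ _
  have := h1.unique h0
  have happ := congrArg (fun L : E d →L[ℝ] ℝ => L w) this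
  simpa using happ

lemma fderiv_coord_snd_zero {X : E d → E d} (hX : Differentiable ℝ X) (m : Fin d)
    (h : ∀ y, (X y).2 m = 0) (x w : E d) : (fderiv ℝ X x w).2 m = 0 := by
  have h1 : HasFDerivAt (⇑(Wc d m) ∘ X) ((Wc d m).comp (fderiv ℝ X x)) x :=
    (Wc d m).hasFDerivAt.comp x (hX x).hasFDerivAt
  have h0 : HasFDerivAt (⇑(Wc d m) ∘ X) (0 : E d →L[ℝ] ℝ) x := by
    have he : (⇑(Wc d m) ∘ X) = fun _ => (0 : ℝ) := funext fun y => h y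
    rw [he]; exact hasFDerivAt_const _ _
  have := h1.unique h0
  have happ := congrArg (fun L : E d →L[ℝ] ℝ => L w) this
  simpa using happ

end Hormander

namespace Hormander

variable {d : ℕ} {γ₁ γd : ℝ} {V U : ℝ → ℝ}

lemma single_coeff {i a : Fin d} (h : a ≠ i) : (Pi.single i 1 : Fin d → ℝ) a = 0 :=
  Pi.single_eq_of_ne h 1

lemma bE_snd_zero (hV : ContDiff ℝ (⊤ : ℕ∞) V) (hU : ContDiff ℝ (⊤ : ℕ∞) U)
    (x v : E d) (K : ℕ)
    (hv1 : ∀ m : Fin d, K ≤ m.1 → v.1 m = 0)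
    (hv2 : ∀ m : Fin d, K + 1 ≤ m.1 → v.2 m = 0)
    (i : Fin d) (hi : K + 1 ≤ i.1) :
    (fderiv ℝ (bE d γ₁ γd V U) x v).2 i = 0 := by
  rw [fderiv_bE_snd hV hU]
  have hvi : v.1 i = 0 := hv1 i (by omega)
  have hv2i : v.2 i = 0 := hv2 i hi
  have hsum : (∑ j : Fin (d - 1),
      ((Pi.single i 1 : Fin d → ℝ) (fup d j) - (Pi.single i 1 : Fin d → ℝ) (flo d j)) *
        (deriv (deriv U) (dlt d j x) * (v.1 (fup d j) - v.1 (flo d j)))) = 0 := by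
    apply Finset.sum_eq_zero
    intro j _
    by_cases hj : j.1 + 1 = i.1 ∨ j.1 = i.1
    · have h1 : v.1 (fup d j) = 0 := hv1 _ (by simp only [fup]; omega)
      have h2 : v.1 (flo d j) = 0 := hv1 _ (by simp only [flo]; omega)
      rw [h1, h2]; ring
    · push_neg at hj
      have h1 : (Pi.single i 1 : Fin d → ℝ) (fup d j) = 0 :=
        single_coeff (by simp only [fup, ne_eq, Fin.ext_iff]; exact hj.1)
      have h2 : (Pi.single i 1 : Fin d → ℝ) (flo d j) = 0 :=
        single_coeff (by simp only [flo, ne_eq, Fin.ext_iff]; exact hj.2)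
      rw [h1, h2]; ring
  rw [hsum, hvi, hv2i]
  have h0 : ¬ i.1 = 0 := by omega
  simp [h0]

lemma bE_snd_top (hV : ContDiff ℝ (⊤ : ℕ∞) V) (hU : ContDiff ℝ (⊤ : ℕ∞) U)
    (x v : E d) (k : ℕ) (hk : k + 1 < d)
    (hv1 : ∀ m : Fin d, k + 1 ≤ m.1 → v.1 m = 0)
    (hv2 : ∀ m : Fin d, k + 1 ≤ m.1 → v.2 m = 0) :
    (fderiv ℝ (bE d γ₁ γd V U) x v).2 ⟨k + 1, hk⟩ =
      deriv (deriv U) (dlt d ⟨k, by omega⟩ x) * v.1 ⟨k, by omega⟩ := by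
  rw [fderiv_bE_snd hV hU]
  set i : Fin d := ⟨k + 1, hk⟩ with hidef
  have hvi : v.1 i = 0 := hv1 i (by simp [hidef])
  have hv2i : v.2 i = 0 := hv2 i (by simp [hidef])
  have hsum : (∑ j : Fin (d - 1),
      ((Pi.single i 1 : Fin d → ℝ) (fup d j) - (Pi.single i 1 : Fin d → ℝ) (flo d j)) *
        (deriv (deriv U) (dlt d j x) * (v.1 (fup d j) - v.1 (flo d j)))) =
      -(deriv (deriv U) (dlt d ⟨k, by omega⟩ x) * v.1 ⟨k, by omega⟩) := by
    rw [Finset.sum_eq_single (⟨k, by omega⟩ : Fin (d - 1))]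
    · have e1 : fup d ⟨k, by omega⟩ = i := by simp [fup, hidef, Fin.ext_iff]
      have e2 : flo d ⟨k, by omega⟩ ≠ i := by simp [flo, hidef, Fin.ext_iff]
      rw [e1, Pi.single_eq_same, single_coeff e2]
      rw [hvi]
      have e4 : flo d (⟨k, by omega⟩ : Fin (d - 1)) = (⟨k, by omega⟩ : Fin d) := rfl
      rw [e4]; ring
    · intro j _ hj
      by_cases hj1 : j.1 = k + 1
      · have h1 : v.1 (fup d j) = 0 := hv1 _ (by simp only [fup]; omega)
        have h2 : v.1 (flo d j) = 0 := hv1 _ (by simp only [flo]; omega)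
        rw [h1, h2]; ring
      · have hjk : j.1 ≠ k := fun h => hj (by simp [Fin.ext_iff, h])
        have h1 : (Pi.single i 1 : Fin d → ℝ) (fup d j) = 0 :=
          single_coeff (by simp only [fup, ne_eq, Fin.ext_iff, hidef]; omega)
        have h2 : (Pi.single i 1 : Fin d → ℝ) (flo d j) = 0 :=
          single_coeff (by simp only [flo, ne_eq, Fin.ext_iff, hidef]; omega)
        rw [h1, h2]; ring
    · intro h; exact absurd (Finset.mem_univ _) h
  rw [hsum, hvi, hv2i]
  have h0 : ¬ i.1 = 0 := by simp [hidef]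
  simp [h0]

end Hormander

namespace Hormander

variable {d : ℕ} {γ₁ γd : ℝ} {V U : ℝ → ℝ}

lemma lie_fst (X : E d → E d) (x : E d) (m : Fin d) :
    (lie d X (bE d γ₁ γd V U) x).1 m =
      (fderiv ℝ (bE d γ₁ γd V U) x (X x)).1 m - (fderiv ℝ X x (bE d γ₁ γd V U x)).1 m := rfl

lemma lie_snd (X : E d → E d) (x : E d) (m : Fin d) :
    (lie d X (bE d γ₁ γd V U) x).2 m =
      (fderiv ℝ (bE d γ₁ γd V U) x (X x)).2 m - (fderiv ℝ X x (bE d γ₁ γd V U x)).2 m := rfl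

section Steps

variable (hV : ContDiff ℝ (⊤ : ℕ∞) V) (hU : ContDiff ℝ (⊤ : ℕ∞) U)
variable {X : E d → E d} (hs : ContDiff ℝ (⊤ : ℕ∞) X)
include hV hU hs

lemma step1_fst_zero (k : ℕ)
    (h1 : ∀ x (m : Fin d), k ≤ m.1 → (X x).1 m = 0)
    (h2 : ∀ x (m : Fin d), k + 1 ≤ m.1 → (X x).2 m = 0)
    (x : E d) (m : Fin d) (hm : k + 1 ≤ m.1) :
    (lie d X (bE d γ₁ γd V U) x).1 m = 0 := by
  rw [lie_fst, fderiv_bE_fst hV hU, h2 x m hm,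
    fderiv_coord_fst_zero (hs.differentiable (by simp)) m
      (fun y => h1 y m (by omega)) x _, sub_zero]

lemma step1_fst_top (k : ℕ) (hk : k < d)
    (h1 : ∀ x (m : Fin d), k ≤ m.1 → (X x).1 m = 0)
    (x : E d) :
    (lie d X (bE d γ₁ γd V U) x).1 ⟨k, hk⟩ = (X x).2 ⟨k, hk⟩ := by
  rw [lie_fst, fderiv_bE_fst hV hU,
    fderiv_coord_fst_zero (hs.differentiable (by simp)) _
      (fun y => h1 y ⟨k, hk⟩ (by simp)) x _, sub_zero]

lemma step1_snd_zero (k : ℕ)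
    (h1 : ∀ x (m : Fin d), k ≤ m.1 → (X x).1 m = 0)
    (h2 : ∀ x (m : Fin d), k + 1 ≤ m.1 → (X x).2 m = 0)
    (x : E d) (m : Fin d) (hm : k + 1 ≤ m.1) :
    (lie d X (bE d γ₁ γd V U) x).2 m = 0 := by
  rw [lie_snd, bE_snd_zero hV hU x (X x) k (h1 x) (h2 x) m hm,
    fderiv_coord_snd_zero (hs.differentiable (by simp)) m
      (fun y => h2 y m hm) x _, sub_zero]

lemma step2_fst_zero (k : ℕ)
    (h1 : ∀ x (m : Fin d), k + 1 ≤ m.1 → (X x).1 m = 0)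
    (h2 : ∀ x (m : Fin d), k + 1 ≤ m.1 → (X x).2 m = 0)
    (x : E d) (m : Fin d) (hm : k + 1 ≤ m.1) :
    (lie d X (bE d γ₁ γd V U) x).1 m = 0 := by
  rw [lie_fst, fderiv_bE_fst hV hU, h2 x m hm,
    fderiv_coord_fst_zero (hs.differentiable (by simp)) m
      (fun y => h1 y m hm) x _, sub_zero]

lemma step2_snd_zero (k : ℕ)
    (h1 : ∀ x (m : Fin d), k + 1 ≤ m.1 → (X x).1 m = 0)
    (h2 : ∀ x (m : Fin d), k + 1 ≤ m.1 → (X x).2 m = 0)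
    (x : E d) (m : Fin d) (hm : k + 2 ≤ m.1) :
    (lie d X (bE d γ₁ γd V U) x).2 m = 0 := by
  rw [lie_snd, bE_snd_zero hV hU x (X x) (k + 1) (h1 x) (fun m' hm' => h2 x m' (by omega)) m hm,
    fderiv_coord_snd_zero (hs.differentiable (by simp)) m
      (fun y => h2 y m (by omega)) x _, sub_zero]

lemma step2_snd_top (k : ℕ) (hk : k + 1 < d)
    (h1 : ∀ x (m : Fin d), k + 1 ≤ m.1 → (X x).1 m = 0)
    (h2 : ∀ x (m : Fin d), k + 1 ≤ m.1 → (X x).2 m = 0)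
    (x : E d) :
    (lie d X (bE d γ₁ γd V U) x).2 ⟨k + 1, hk⟩ =
      deriv (deriv U) (dlt d ⟨k, by omega⟩ x) * (X x).1 ⟨k, by omega⟩ := by
  rw [lie_snd, bE_snd_top hV hU x (X x) k hk (h1 x) (h2 x),
    fderiv_coord_snd_zero (hs.differentiable (by simp)) _
      (fun y => h2 y ⟨k + 1, hk⟩ (by simp)) x _, sub_zero]

end Steps

end Hormander

namespace Hormander

variable {d : ℕ} {γ₁ γd : ℝ} {V U : ℝ → ℝ}

lemma key (hd : 3 ≤ d) (hV : ContDiff ℝ (⊤ : ℕ∞) V) (hU : ContDiff ℝ (⊤ : ℕ∞) U)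
    (hU'' : ∀ s : ℝ, 0 < deriv (deriv U) s) :
    ∀ k : ℕ, ∀ hk : k + 2 ≤ d,
      (ContDiff ℝ (⊤ : ℕ∞) (UU d (bE d γ₁ γd V U) (eu d ⟨0, by omega⟩) (2 * k)) ∧
       ContDiff ℝ (⊤ : ℕ∞) (UU d (bE d γ₁ γd V U) (eu d ⟨0, by omega⟩) (2 * k + 1))) ∧
      (∀ x : E d,
        (∀ m : Fin d, k ≤ m.1 → (UU d (bE d γ₁ γd V U) (eu d ⟨0, by omega⟩) (2 * k) x).1 m = 0) ∧
        (∀ m : Fin d, k + 1 ≤ m.1 → (UU d (bE d γ₁ γd V U) (eu d ⟨0, by omega⟩) (2 * k) x).2 m = 0) ∧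
        0 < (UU d (bE d γ₁ γd V U) (eu d ⟨0, by omega⟩) (2 * k) x).2 ⟨k, by omega⟩ ∧
        (∀ m : Fin d, k + 1 ≤ m.1 → (UU d (bE d γ₁ γd V U) (eu d ⟨0, by omega⟩) (2 * k + 1) x).1 m = 0) ∧
        0 < (UU d (bE d γ₁ γd V U) (eu d ⟨0, by omega⟩) (2 * k + 1) x).1 ⟨k, by omega⟩ ∧
        (∀ m : Fin d, k + 1 ≤ m.1 → (UU d (bE d γ₁ γd V U) (eu d ⟨0, by omega⟩) (2 * k + 1) x).2 m = 0)) := by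
  set b := bE d γ₁ γd V U with hb
  set e₀ : E d := eu d ⟨0, by omega⟩ with he₀
  intro k
  induction k with
  | zero =>
    intro hk
    have hU0 : UU d b e₀ 0 = fun _ => e₀ := rfl
    have h01 : ∀ x (m : Fin d), 0 ≤ m.1 → (UU d b e₀ 0 x).1 m = 0 := by
      intro x m _; rw [hU0]; rfl
    have h02 : ∀ x (m : Fin d), 0 + 1 ≤ m.1 → (UU d b e₀ 0 x).2 m = 0 := by
      intro x m hm
      have hne : m ≠ (⟨0, by omega⟩ : Fin d) := by simp [Fin.ext_iff]; omega
      show (e₀).2 m = 0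
      rw [he₀]
      exact Pi.single_eq_of_ne hne 1
    have hc0 : ContDiff ℝ (⊤ : ℕ∞) (UU d b e₀ 0) := by rw [hU0]; exact contDiff_const
    have hU1 : UU d b e₀ 1 = lie d (UU d b e₀ 0) b := rfl
    refine ⟨⟨hc0, ?_⟩, ?_⟩
    · rw [hU1]; exact lie_contDiff hc0 (bE_contDiff hV hU)
    · intro x
      have htop0 : (UU d b e₀ 0 x).2 ⟨0, by omega⟩ = 1 := by
        show (e₀).2 ⟨0, by omega⟩ = 1
        rw [he₀]
        simp [eu]
      refine ⟨h01 x, h02 x, by rw [htop0]; norm_num, ?_, ?_, ?_⟩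
      · intro m hm
        rw [hU1]
        exact step1_fst_zero hV hU hc0 0 (fun y m' h => h01 y m' h) (fun y m' h => h02 y m' h) x m hm
      · rw [hU1, step1_fst_top hV hU hc0 0 (by omega) (fun y m' h => h01 y m' h) x, htop0]
        norm_num
      · intro m hm
        rw [hU1]
        exact step1_snd_zero hV hU hc0 0 (fun y m' h => h01 y m' h) (fun y m' h => h02 y m' h) x m hm
  | succ k ih =>
    intro hk
    obtain ⟨⟨hc0, hc1⟩, hx⟩ := ih (by omega)
    -- properties of UU (2k+1)
    have h1 : ∀ x (m : Fin d), k + 1 ≤ m.1 → (UU d b e₀ (2 * k + 1) x).1 m = 0 :=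
      fun x m hm => (hx x).2.2.2.1 m hm
    have h2 : ∀ x (m : Fin d), k + 1 ≤ m.1 → (UU d b e₀ (2 * k + 1) x).2 m = 0 :=
      fun x m hm => (hx x).2.2.2.2.2 m hm
    have htop : ∀ x : E d, 0 < (UU d b e₀ (2 * k + 1) x).1 ⟨k, by omega⟩ :=
      fun x => (hx x).2.2.2.2.1
    have hidx : 2 * (k + 1) = (2 * k + 1) + 1 := by ring
    have hE : UU d b e₀ (2 * (k + 1)) = lie d (UU d b e₀ (2 * k + 1)) b := by
      rw [hidx]
      rfl
    have hcE : ContDiff ℝ (⊤ : ℕ∞) (UU d b e₀ (2 * (k + 1))) := by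
      rw [hE]; exact lie_contDiff hc1 (bE_contDiff hV hU)
    have hE1 : ∀ x (m : Fin d), k + 1 ≤ m.1 → (UU d b e₀ (2 * (k + 1)) x).1 m = 0 := by
      intro x m hm; rw [hE]
      exact step2_fst_zero hV hU hc1 k h1 h2 x m hm
    have hE2 : ∀ x (m : Fin d), k + 2 ≤ m.1 → (UU d b e₀ (2 * (k + 1)) x).2 m = 0 := by
      intro x m hm; rw [hE]
      exact step2_snd_zero hV hU hc1 k h1 h2 x m hm
    have hEtop : ∀ x : E d, 0 < (UU d b e₀ (2 * (k + 1)) x).2 ⟨k + 1, by omega⟩ := by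
      intro x
      rw [hE, step2_snd_top hV hU hc1 k (by omega) h1 h2 x]
      exact mul_pos (hU'' _) (htop x)
    have hO : UU d b e₀ (2 * (k + 1) + 1) = lie d (UU d b e₀ (2 * (k + 1))) b := rfl
    have hcO : ContDiff ℝ (⊤ : ℕ∞) (UU d b e₀ (2 * (k + 1) + 1)) := by
      rw [hO]; exact lie_contDiff hcE (bE_contDiff hV hU)
    refine ⟨⟨hcE, hcO⟩, ?_⟩
    intro x
    refine ⟨hE1 x, hE2 x, hEtop x, ?_, ?_, ?_⟩
    · intro m hm; rw [hO]
      exact step1_fst_zero hV hU hcE (k + 1) hE1 hE2 x m hm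
    · rw [hO, step1_fst_top hV hU hcE (k + 1) (by omega) hE1 x]
      exact hEtop x
    · intro m hm; rw [hO]
      exact step1_snd_zero hV hU hcE (k + 1) hE1 hE2 x m hm

end Hormander

namespace Hormander

variable {d : ℕ}

lemma sum_single (w : Fin d → ℝ) :
    (∑ m : Fin d, w m • (Pi.single m 1 : Fin d → ℝ)) = w := by
  funext a
  rw [Finset.sum_apply]
  simp [Pi.single_apply, mul_ite, Finset.sum_ite_eq]

lemma decomp (v : E d) :
    v = (∑ m : Fin d, v.1 m • ez d m) + ∑ m : Fin d, v.2 m • eu d m := by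
  have h1 := sum_single v.1
  have h2 := sum_single v.2
  apply Prod.ext
  · simp only [Prod.fst_add, Prod.fst_sum, ez, eu, Prod.smul_fst, smul_zero,
      Finset.sum_const_zero, add_zero, h1]
  · simp only [Prod.snd_add, Prod.snd_sum, ez, eu, Prod.smul_snd, smul_zero,
      Finset.sum_const_zero, zero_add, h2]

lemma extract_eu (Sp : Submodule ℝ (E d)) (v : E d) (hv : v ∈ Sp) (t : Fin d)
    (hz : ∀ m : Fin d, v.1 m • ez d m ∈ Sp)
    (hu : ∀ m : Fin d, m ≠ t → v.2 m • eu d m ∈ Sp) :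
    v.2 t • eu d t ∈ Sp := by
  have hdc := decomp v
  have hsum : (∑ m ∈ Finset.univ.erase t, v.2 m • eu d m) ∈ Sp :=
    Submodule.sum_mem _ fun m hm => hu m (Finset.ne_of_mem_erase hm)
  have hz' : (∑ m : Fin d, v.1 m • ez d m) ∈ Sp :=
    Submodule.sum_mem _ fun m _ => hz m
  have h2 : (∑ m : Fin d, v.2 m • eu d m) =
      v.2 t • eu d t + ∑ m ∈ Finset.univ.erase t, v.2 m • eu d m :=
    (Finset.add_sum_erase _ _ (Finset.mem_univ t)).symm
  rw [h2] at hdc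
  set S1 := ∑ m : Fin d, v.1 m • ez d m with hS1
  set Se := ∑ m ∈ Finset.univ.erase t, v.2 m • eu d m with hSe
  set c := v.2 t with hc
  have heq : c • eu d t = v - S1 - Se := by rw [hdc]; abel
  rw [heq]
  exact Submodule.sub_mem _ (Submodule.sub_mem _ hv hz') hsum

lemma extract_ez (Sp : Submodule ℝ (E d)) (v : E d) (hv : v ∈ Sp) (t : Fin d)
    (hz : ∀ m : Fin d, m ≠ t → v.1 m • ez d m ∈ Sp)
    (hu : ∀ m : Fin d, v.2 m • eu d m ∈ Sp) :
    v.1 t • ez d t ∈ Sp := by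
  have hdc := decomp v
  have hsum : (∑ m ∈ Finset.univ.erase t, v.1 m • ez d m) ∈ Sp :=
    Submodule.sum_mem _ fun m hm => hz m (Finset.ne_of_mem_erase hm)
  have hu' : (∑ m : Fin d, v.2 m • eu d m) ∈ Sp :=
    Submodule.sum_mem _ fun m _ => hu m
  have h2 : (∑ m : Fin d, v.1 m • ez d m) =
      v.1 t • ez d t + ∑ m ∈ Finset.univ.erase t, v.1 m • ez d m :=
    (Finset.add_sum_erase _ _ (Finset.mem_univ t)).symm
  rw [h2] at hdc
  set Se := ∑ m ∈ Finset.univ.erase t, v.1 m • ez d m with hSe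
  set S2 := ∑ m : Fin d, v.2 m • eu d m with hS2
  set c := v.1 t with hc
  have heq : c • ez d t = v - Se - S2 := by rw [hdc]; abel
  rw [heq]
  exact Submodule.sub_mem _ (Submodule.sub_mem _ hv hsum) hu'

lemma smul_mem_cancel {Sp : Submodule ℝ (E d)} {c : ℝ} {w : E d} (hc : c ≠ 0)
    (h : c • w ∈ Sp) : w ∈ Sp := by
  have := Sp.smul_mem c⁻¹ h
  rwa [smul_smul, inv_mul_cancel₀ hc, one_smul] at this

end Hormander

namespace Hormander

lemma main_claim {d : ℕ} {γ₁ γd : ℝ} {V U : ℝ → ℝ} (hd : 3 ≤ d)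
    (hV : ContDiff ℝ (⊤ : ℕ∞) V) (hU : ContDiff ℝ (⊤ : ℕ∞) U)
    (hU'' : ∀ s : ℝ, 0 < deriv (deriv U) s)
    (x : E d) (Sp : Submodule ℝ (E d))
    (hmem : ∀ n : ℕ, n < 2 * d - 2 →
      UU d (bE d γ₁ γd V U) (eu d ⟨0, Nat.lt_of_lt_of_le (by norm_num) hd⟩) n x ∈ Sp) :
    ∀ k : ℕ, k + 2 ≤ d → ∀ m : Fin d, m.1 ≤ k → ez d m ∈ Sp ∧ eu d m ∈ Sp := by
  intro k
  induction k with
  | zero =>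
    intro hk m hm
    have hm0 : m = ⟨0, Nat.lt_of_lt_of_le (by norm_num) hd⟩ := Fin.ext (show m.1 = 0 by omega)
    rw [hm0]
    obtain ⟨-, hprops⟩ := key (γ₁ := γ₁) (γd := γd) hd hV hU hU'' 0 (by omega)
    obtain ⟨h01, h02, htop0, h11, h1top, h12⟩ := hprops x
    have heu : eu d (⟨0, Nat.lt_of_lt_of_le (by norm_num) hd⟩ : Fin d) ∈ Sp := hmem 0 (by omega)
    refine ⟨?_, heu⟩
    have hv : UU d (bE d γ₁ γd V U) (eu d ⟨0, Nat.lt_of_lt_of_le (by norm_num) hd⟩) 1 x ∈ Sp := hmem 1 (by omega)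
    have hez0 : (UU d (bE d γ₁ γd V U) (eu d ⟨0, Nat.lt_of_lt_of_le (by norm_num) hd⟩) 1 x).1 ⟨0, Nat.lt_of_lt_of_le (by norm_num) hd⟩ •
        ez d ⟨0, Nat.lt_of_lt_of_le (by norm_num) hd⟩ ∈ Sp := by
      apply extract_ez Sp _ hv
      · intro m' hm'
        have hne : (0 : ℕ) + 1 ≤ m'.1 := by
          rcases Nat.eq_zero_or_pos m'.1 with h | h
          · exact absurd (Fin.ext h) hm'
          · omega
        rw [h11 m' hne, zero_smul]; exact Sp.zero_mem
      · intro m'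
        by_cases hm' : m' = (⟨0, Nat.lt_of_lt_of_le (by norm_num) hd⟩ : Fin d)
        · rw [hm']; exact Sp.smul_mem _ heu
        · have hne : (0 : ℕ) + 1 ≤ m'.1 := by
            rcases Nat.eq_zero_or_pos m'.1 with h | h
            · exact absurd (Fin.ext h) hm'
            · omega
          rw [h12 m' hne, zero_smul]; exact Sp.zero_mem
    exact smul_mem_cancel (ne_of_gt h1top) hez0
  | succ k ih =>
    intro hk m hm
    by_cases hmk : m.1 ≤ k
    · exact ih (by omega) m hmk
    · have hmval : m = ⟨k + 1, by omega⟩ := Fin.ext (show m.1 = k + 1 by omega)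
      rw [hmval]
      obtain ⟨-, hprops⟩ := key (γ₁ := γ₁) (γd := γd) hd hV hU hU'' (k + 1) (by omega)
      obtain ⟨hE1, hE2, hEtop, hO1, hOtop, hO2⟩ := hprops x
      have hIH : ∀ m' : Fin d, m'.1 ≤ k → ez d m' ∈ Sp ∧ eu d m' ∈ Sp := ih (by omega)
      have hvE : UU d (bE d γ₁ γd V U) (eu d ⟨0, Nat.lt_of_lt_of_le (by norm_num) hd⟩) (2 * (k + 1)) x ∈ Sp :=
        hmem _ (by omega)
      have heu' : (UU d (bE d γ₁ γd V U) (eu d ⟨0, Nat.lt_of_lt_of_le (by norm_num) hd⟩) (2 * (k + 1)) x).2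
          ⟨k + 1, by omega⟩ • eu d ⟨k + 1, by omega⟩ ∈ Sp := by
        apply extract_eu Sp _ hvE
        · intro m'
          by_cases h : m'.1 ≤ k
          · exact Sp.smul_mem _ (hIH m' h).1
          · rw [hE1 m' (by omega), zero_smul]; exact Sp.zero_mem
        · intro m' hm'
          by_cases h : m'.1 ≤ k
          · exact Sp.smul_mem _ (hIH m' h).2
          · have hne : m'.1 ≠ k + 1 := fun hh => hm' (Fin.ext hh)
            rw [hE2 m' (by omega), zero_smul]; exact Sp.zero_mem
      have heu : eu d (⟨k + 1, by omega⟩ : Fin d) ∈ Sp :=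
        smul_mem_cancel (ne_of_gt hEtop) heu'
      refine ⟨?_, heu⟩
      have hvO : UU d (bE d γ₁ γd V U) (eu d ⟨0, Nat.lt_of_lt_of_le (by norm_num) hd⟩) (2 * (k + 1) + 1) x ∈ Sp :=
        hmem _ (by omega)
      have hez' : (UU d (bE d γ₁ γd V U) (eu d ⟨0, Nat.lt_of_lt_of_le (by norm_num) hd⟩) (2 * (k + 1) + 1) x).1
          ⟨k + 1, by omega⟩ • ez d ⟨k + 1, by omega⟩ ∈ Sp := by
        apply extract_ez Sp _ hvO
        · intro m' hm'
          by_cases h : m'.1 ≤ k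
          · exact Sp.smul_mem _ (hIH m' h).1
          · have hne : m'.1 ≠ k + 1 := fun hh => hm' (Fin.ext hh)
            rw [hO1 m' (by omega), zero_smul]; exact Sp.zero_mem
        · intro m'
          by_cases h : m'.1 ≤ k
          · exact Sp.smul_mem _ (hIH m' h).2
          · by_cases h2 : m' = (⟨k + 1, by omega⟩ : Fin d)
            · rw [h2]; exact Sp.smul_mem _ heu
            · have hne : m'.1 ≠ k + 1 := fun hh => h2 (Fin.ext hh)
              rw [hO2 m' (by omega), zero_smul]; exact Sp.zero_mem
      exact smul_mem_cancel (ne_of_gt hOtop) hez'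

end Hormander

theorem stmt14 (d : ℕ) (hd : 3 ≤ d) (γ₁ γd : ℝ) (V U : ℝ → ℝ)
    (hV : ContDiff ℝ (⊤ : ℕ∞) V) (hU : ContDiff ℝ (⊤ : ℕ∞) U)
    (hU'' : ∀ s : ℝ, 0 < deriv (deriv U) s) :
    ∀ x : E d, ∀ i : Fin (d - 1),
      ez d ⟨i.1, by have := i.2; omega⟩ ∈
        Submodule.span ℝ
          (Set.range fun n : Fin (2 * d - 2) => UU d (drift d γ₁ γd V U) (eu d ⟨0, by omega⟩) n.1 x) ∧
      eu d ⟨i.1, by have := i.2; omega⟩ ∈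
        Submodule.span ℝ
          (Set.range fun n : Fin (2 * d - 2) => UU d (drift d γ₁ γd V U) (eu d ⟨0, by omega⟩) n.1 x) := by
  intro x i
  rw [Hormander.drift_eq hV hU]
  have hmem : ∀ n : ℕ, n < 2 * d - 2 →
      UU d (Hormander.bE d γ₁ γd V U) (eu d ⟨0, by omega⟩) n x ∈
        Submodule.span ℝ (Set.range fun n : Fin (2 * d - 2) =>
          UU d (Hormander.bE d γ₁ γd V U) (eu d ⟨0, by omega⟩) n.1 x) :=
    fun n hn => Submodule.subset_span ⟨⟨n, hn⟩, rfl⟩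
  exact Hormander.main_claim hd hV hU hU'' x _ hmem i.1 (by have := i.2; omega)
    ⟨i.1, by have := i.2; omega⟩ (le_refl _)
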